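/- Let A generate an exponentially stable C0-semigroup on a separable Hilbert space H, let C ∈ L(D(A),Y) be an admissible observation operator for A, and P ∈ L(D(A),H) an admissible observation operator for A such that A+P (with domain D(A)) generates an exponentially stable C0-semigroup S on H. If the map λ ↦ C R(λ,A) belongs to H²(L₂(H,Y)) on the right half-plane, and sup_{Re λ>0} ‖P R(λ, A+P)‖ < ∞, then λ ↦ C R(λ, A+P) also belongs to H²(L₂(H,Y)). -/

import Mathlib

open MeasureTheory Filter Set Topology ENNReal

/-- Squared Hilbert–Schmidt norm with respect to a Hilbert basis of `H`. -/
noncomputable def hsNormSq {H X : Type*} [NormedAddCommGroup H] [InnerProductSpace ℂ H]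
    [NormedAddCommGroup X] (e : HilbertBasis ℕ ℂ H) (f : H → X) : ℝ≥0∞ :=
  ∑' k, (‖f (e k)‖₊ : ℝ≥0∞) ^ 2

/-- The operator `C R(λ) : H → Y` for a resolvent family defined on the open right
half-plane (junk value `0` elsewhere). -/
noncomputable def CRes {H Y : Type*} [NormedAddCommGroup H] [InnerProductSpace ℂ H]
    [NormedAddCommGroup Y] [NormedSpace ℂ Y]
    (DA : Submodule ℂ H) (C : DA →ₗ[ℂ] Y) (R : ℂ → H →L[ℂ] H)
    (hmem : ∀ lam : ℂ, 0 < lam.re → ∀ x : H, R lam x ∈ DA) (lam : ℂ) (x : H) : Y :=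
  if h : 0 < lam.re then C ⟨R lam x, hmem lam h x⟩ else 0

/-- Membership in the Hardy space `H²(L₂(H,Y))` of an operator-valued function on the open
right half-plane: (strong) analyticity together with uniform square-integrability of the
Hilbert–Schmidt norms on vertical lines. -/
def MemH2HS {H Y : Type*} [NormedAddCommGroup H] [InnerProductSpace ℂ H]
    [NormedAddCommGroup Y] [NormedSpace ℂ Y] (e : HilbertBasis ℕ ℂ H) (G : ℂ → H → Y) : Prop :=
  (∀ x : H, DifferentiableOn ℂ (fun lam => G lam x) {lam : ℂ | 0 < lam.re}) ∧
  ∃ M : ℝ≥0∞, M < ⊤ ∧ ∀ a : ℝ, 0 < a →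
    (∫⁻ b : ℝ, hsNormSq e (G ((a : ℂ) + (b : ℂ) * Complex.I))) ≤ M

open scoped InnerProductSpace

private lemma parseval_real' {E : Type*} [NormedAddCommGroup E] [InnerProductSpace ℂ E]
    [CompleteSpace E] {ι : Type*} (b : HilbertBasis ι ℂ E) (x : E) :
    HasSum (fun i => ‖(⟪b i, x⟫_ℂ)‖ ^ 2) (‖x‖ ^ 2) := by
  have h := b.hasSum_inner_mul_inner x x
  have heq : (fun i => ⟪x, b i⟫_ℂ * ⟪b i, x⟫_ℂ) = fun i => ((‖(⟪b i, x⟫_ℂ)‖ ^ 2 : ℝ) : ℂ) := by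
    funext i
    rw [← inner_conj_symm x (b i), RCLike.conj_mul]; norm_cast
  rw [heq, inner_self_eq_norm_sq_to_K] at h
  exact Complex.hasSum_ofReal.1 (by simpa using h)

private lemma parseval_ennreal' {E : Type*} [NormedAddCommGroup E] [InnerProductSpace ℂ E]
    [CompleteSpace E] {ι : Type*} (b : HilbertBasis ι ℂ E) (x : E) :
    (‖x‖₊ : ℝ≥0∞) ^ 2 = ∑' i, (‖(⟪b i, x⟫_ℂ)‖₊ : ℝ≥0∞) ^ 2 := by
  have h := parseval_real' b x
  have h2 := ENNReal.ofReal_tsum_of_nonneg (fun i => by positivity) h.summable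
  rw [h.tsum_eq] at h2
  calc (‖x‖₊ : ℝ≥0∞) ^ 2 = ENNReal.ofReal (‖x‖ ^ 2) := by
        rw [ENNReal.ofReal_pow (norm_nonneg _), ofReal_norm, enorm_eq_nnnorm]
    _ = ∑' i, ENNReal.ofReal (‖(⟪b i, x⟫_ℂ)‖ ^ 2) := h2
    _ = ∑' i, (‖(⟪b i, x⟫_ℂ)‖₊ : ℝ≥0∞) ^ 2 := by
        congr 1; funext i
        rw [ENNReal.ofReal_pow (norm_nonneg _), ofReal_norm, enorm_eq_nnnorm]

private lemma hs_comp_le' {H Y : Type*} [NormedAddCommGroup H] [InnerProductSpace ℂ H]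
    [CompleteSpace H] [NormedAddCommGroup Y] [InnerProductSpace ℂ Y] [CompleteSpace Y]
    (e : HilbertBasis ℕ ℂ H) (T : H →L[ℂ] Y) (B : H →L[ℂ] H) :
    ∑' k, (‖T (B (e k))‖₊ : ℝ≥0∞) ^ 2 ≤ (‖B‖₊ : ℝ≥0∞) ^ 2 * ∑' k, (‖T (e k)‖₊ : ℝ≥0∞) ^ 2 := by
  set Y₀ : Submodule ℂ Y := (LinearMap.range (T : H →ₗ[ℂ] Y)).topologicalClosure with hY₀
  haveI : CompleteSpace Y₀ := (Submodule.isClosed_topologicalClosure _).completeSpace_coe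
  obtain ⟨w, f, -⟩ := exists_hilbertBasis ℂ Y₀
  have hmem : ∀ v : H, T v ∈ Y₀ := fun v =>
    Submodule.le_topologicalClosure _ ⟨v, rfl⟩
  have key : ∀ v : H, (‖T v‖₊ : ℝ≥0∞) ^ 2 = ∑' j, (‖(⟪((f j : Y₀) : Y), T v⟫_ℂ)‖₊ : ℝ≥0∞) ^ 2 := by
    intro v
    have h := parseval_ennreal' f (⟨T v, hmem v⟩ : Y₀)
    rw [show (‖(⟨T v, hmem v⟩ : Y₀)‖₊) = ‖T v‖₊ from rfl] at h
    simpa [Submodule.coe_inner] using h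
  have inner_eq : ∀ (j : ↑w) (v : H),
      ⟪((f j : Y₀) : Y), T v⟫_ℂ = ⟪(ContinuousLinearMap.adjoint T) ((f j : Y₀) : Y), v⟫_ℂ :=
    fun j v => (ContinuousLinearMap.adjoint_inner_left T v _).symm
  have parsH : ∀ u : H, (‖u‖₊ : ℝ≥0∞) ^ 2 = ∑' k, (‖(⟪(e k : H), u⟫_ℂ)‖₊ : ℝ≥0∞) ^ 2 :=
    fun u => parseval_ennreal' e u
  have norm_adj : ∀ u : H,
      (‖(ContinuousLinearMap.adjoint B) u‖₊ : ℝ≥0∞) ^ 2 ≤ (‖B‖₊ : ℝ≥0∞) ^ 2 * (‖u‖₊ : ℝ≥0∞) ^ 2 := by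
    intro u
    rw [← mul_pow]
    gcongr
    rw [← ENNReal.coe_mul, ENNReal.coe_le_coe, ← NNReal.coe_le_coe]
    push_cast
    calc ‖(ContinuousLinearMap.adjoint B) u‖ ≤ ‖ContinuousLinearMap.adjoint B‖ * ‖u‖ :=
          (ContinuousLinearMap.adjoint B).le_opNorm u
      _ = ‖B‖ * ‖u‖ := by rw [LinearIsometryEquiv.norm_map]
  have hsymm : ∀ u v : H, (‖(⟪u, v⟫_ℂ)‖₊ : ℝ≥0∞) = (‖(⟪v, u⟫_ℂ)‖₊ : ℝ≥0∞) := fun u v => by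
    rw [← enorm_eq_nnnorm, ← enorm_eq_nnnorm, ← ofReal_norm, ← ofReal_norm, norm_inner_symm]
  calc ∑' k, (‖T (B (e k))‖₊ : ℝ≥0∞) ^ 2
      = ∑' k, ∑' j : ↑w, (‖(⟪((f j : Y₀) : Y), T (B (e k))⟫_ℂ)‖₊ : ℝ≥0∞) ^ 2 := by
        simp only [key]
    _ = ∑' j : ↑w, ∑' k, (‖(⟪(e k : H),
          (ContinuousLinearMap.adjoint B) ((ContinuousLinearMap.adjoint T) ((f j : Y₀) : Y))⟫_ℂ)‖₊ : ℝ≥0∞) ^ 2 := by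
        rw [ENNReal.tsum_comm]
        congr 1; funext j; congr 1; funext k
        rw [inner_eq, ← ContinuousLinearMap.adjoint_inner_left B, ← hsymm]
    _ = ∑' j : ↑w, (‖(ContinuousLinearMap.adjoint B)
          ((ContinuousLinearMap.adjoint T) ((f j : Y₀) : Y))‖₊ : ℝ≥0∞) ^ 2 := by
        congr 1; funext j; exact (parsH _).symm
    _ ≤ ∑' j : ↑w, (‖B‖₊ : ℝ≥0∞) ^ 2 * (‖(ContinuousLinearMap.adjoint T) ((f j : Y₀) : Y)‖₊ : ℝ≥0∞) ^ 2 :=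
        ENNReal.tsum_le_tsum fun j => norm_adj _
    _ = (‖B‖₊ : ℝ≥0∞) ^ 2 * ∑' j : ↑w, (‖(ContinuousLinearMap.adjoint T) ((f j : Y₀) : Y)‖₊ : ℝ≥0∞) ^ 2 :=
        ENNReal.tsum_mul_left
    _ = (‖B‖₊ : ℝ≥0∞) ^ 2 * ∑' k, (‖T (e k)‖₊ : ℝ≥0∞) ^ 2 := by
        congr 1
        calc ∑' j : ↑w, (‖(ContinuousLinearMap.adjoint T) ((f j : Y₀) : Y)‖₊ : ℝ≥0∞) ^ 2
            = ∑' j : ↑w, ∑' k, (‖(⟪(e k : H), (ContinuousLinearMap.adjoint T) ((f j : Y₀) : Y)⟫_ℂ)‖₊ : ℝ≥0∞) ^ 2 := by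
              congr 1; funext j; exact parsH _
          _ = ∑' k, ∑' j : ↑w, (‖(⟪(e k : H), (ContinuousLinearMap.adjoint T) ((f j : Y₀) : Y)⟫_ℂ)‖₊ : ℝ≥0∞) ^ 2 :=
              ENNReal.tsum_comm
          _ = ∑' k, (‖T (e k)‖₊ : ℝ≥0∞) ^ 2 := by
              congr 1; funext k
              rw [key]
              congr 1; funext j
              rw [inner_eq, hsymm]

/-- Let `A` generate an exponentially stable C0-semigroup `T` on `H`, let
`C ∈ L(D(A),Y)` and `P ∈ L(D(A),H)` be admissible observation operators for `A` such that
`A+P` (domain `D(A)`) generates an exponentially stable C0-semigroup `S`.  If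
`λ ↦ C R(λ,A)` belongs to `H²(L₂(H,Y))` and `sup_{Re λ>0} ‖P R(λ,A+P)‖ < ∞`, then
`λ ↦ C R(λ,A+P)` belongs to `H²(L₂(H,Y))` as well. -/
theorem memH2HS_perturbed_resolvent
    {H Y : Type*} [NormedAddCommGroup H] [InnerProductSpace ℂ H] [CompleteSpace H]
    [NormedAddCommGroup Y] [InnerProductSpace ℂ Y] [CompleteSpace Y]
    (e : HilbertBasis ℕ ℂ H)
    (T : ℝ → H →L[ℂ] H)
    (hT0 : T 0 = 1)
    (hTsg : ∀ s t : ℝ, 0 ≤ s → 0 ≤ t → T (s + t) = (T s).comp (T t))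
    (hTcont : ∀ x : H, ContinuousOn (fun t => T t x) (Ici (0:ℝ)))
    (DA : Submodule ℂ H) (Agen : DA →ₗ[ℂ] H)
    (hgen : ∀ x : DA,
      Tendsto (fun t : ℝ => (t : ℂ)⁻¹ • (T t x - (x : H))) (𝓝[>] 0) (𝓝 (Agen x)))
    (hTdom : ∀ t : ℝ, 0 ≤ t → ∀ x : H, x ∈ DA → T t x ∈ DA)
    -- exponential stability of `T`:
    (hstabT : ∃ M ε : ℝ, 0 < ε ∧ ∀ t : ℝ, 0 ≤ t → ‖T t‖ ≤ M * Real.exp (-ε * t))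
    (C : DA →ₗ[ℂ] Y)
    (hCbd : ∃ c : ℝ, ∀ x : DA, ‖C x‖ ≤ c * (‖(x : H)‖ + ‖Agen x‖))
    -- `C` is an admissible observation operator for `A`:
    (hCadm : ∃ α : ℝ, 0 < α ∧ ∃ γ : ℝ, ∀ x : DA,
      (∫ t in (0:ℝ)..α, ‖(if ht : (0:ℝ) ≤ t then
          C ⟨T t (x : H), hTdom t ht (x : H) x.2⟩ else 0)‖ ^ 2) ≤ γ ^ 2 * ‖(x : H)‖ ^ 2)
    (P : DA →ₗ[ℂ] H)
    (hPbd : ∃ c : ℝ, ∀ x : DA, ‖P x‖ ≤ c * (‖(x : H)‖ + ‖Agen x‖))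
    -- `P` is an admissible observation operator for `A`:
    (hPadm : ∃ α : ℝ, 0 < α ∧ ∃ γ : ℝ, ∀ x : DA,
      (∫ t in (0:ℝ)..α, ‖(if ht : (0:ℝ) ≤ t then
          P ⟨T t (x : H), hTdom t ht (x : H) x.2⟩ else 0)‖ ^ 2) ≤ γ ^ 2 * ‖(x : H)‖ ^ 2)
    -- the semigroup `S` generated by `A + P` (domain `D(A)`), exponentially stable:
    (S : ℝ → H →L[ℂ] H)
    (hS0 : S 0 = 1)
    (hSsg : ∀ s t : ℝ, 0 ≤ s → 0 ≤ t → S (s + t) = (S s).comp (S t))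
    (hScont : ∀ x : H, ContinuousOn (fun t => S t x) (Ici (0:ℝ)))
    (hSgen : ∀ x : DA,
      Tendsto (fun t : ℝ => (t : ℂ)⁻¹ • (S t x - (x : H))) (𝓝[>] 0) (𝓝 (Agen x + P x)))
    (hstabS : ∃ M ε : ℝ, 0 < ε ∧ ∀ t : ℝ, 0 ≤ t → ‖S t‖ ≤ M * Real.exp (-ε * t))
    -- the resolvent `R(λ,A)` on the right half-plane:
    (RA : ℂ → H →L[ℂ] H)
    (hmemA : ∀ lam : ℂ, 0 < lam.re → ∀ x : H, RA lam x ∈ DA)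
    (hresA : ∀ (lam : ℂ) (h : 0 < lam.re) (x : H),
      lam • RA lam x - Agen ⟨RA lam x, hmemA lam h x⟩ = x)
    (hresA2 : ∀ lam : ℂ, 0 < lam.re → ∀ x : DA, RA lam (lam • (x : H) - Agen x) = (x : H))
    -- the resolvent `R(λ,A+P)` on the right half-plane:
    (RAP : ℂ → H →L[ℂ] H)
    (hmemAP : ∀ lam : ℂ, 0 < lam.re → ∀ x : H, RAP lam x ∈ DA)
    (hresAP : ∀ (lam : ℂ) (h : 0 < lam.re) (x : H),
      lam • RAP lam x - (Agen ⟨RAP lam x, hmemAP lam h x⟩ + P ⟨RAP lam x, hmemAP lam h x⟩)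
        = x)
    (hresAP2 : ∀ lam : ℂ, 0 < lam.re → ∀ x : DA,
      RAP lam (lam • (x : H) - (Agen x + P x)) = (x : H))
    -- `λ ↦ C R(λ,A)` belongs to `H²(L₂(H,Y))`:
    (hH2 : MemH2HS e (CRes DA C RA hmemA))
    -- `sup_{Re λ > 0} ‖P R(λ,A+P)‖ < ∞`:
    (hPRbdd : ∃ Mb : ℝ, ∀ (lam : ℂ) (h : 0 < lam.re) (x : H),
      ‖P ⟨RAP lam x, hmemAP lam h x⟩‖ ≤ Mb * ‖x‖) :
    MemH2HS e (CRes DA C RAP hmemAP) := by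
  classical
  clear hT0 hTsg hTcont hgen hstabT hCadm hPbd hPadm hS0 hSsg hScont hSgen hstabS
  obtain ⟨c, hc⟩ := hCbd
  obtain ⟨Mb, hMb⟩ := hPRbdd
  set Mb' : ℝ := max Mb 0 with hMb'def
  have hMb'0 : 0 ≤ Mb' := le_max_right _ _
  have hMb' : ∀ (lam : ℂ) (h : 0 < lam.re) (x : H),
      ‖P ⟨RAP lam x, hmemAP lam h x⟩‖ ≤ Mb' * ‖x‖ := fun lam h x =>
    (hMb lam h x).trans (mul_le_mul_of_nonneg_right (le_max_left _ _) (norm_nonneg _))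
  -- resolvent identity for RAP
  have res_id : ∀ (lam mu : ℂ), 0 < lam.re → 0 < mu.re → ∀ x : H,
      RAP lam x = RAP mu x - (lam - mu) • RAP lam (RAP mu x) := by
    intro lam mu hlam hmu x
    have h1 := hresAP2 lam hlam ⟨RAP mu x, hmemAP mu hmu x⟩
    have h2 := hresAP mu hmu x
    have h4 : Agen ⟨RAP mu x, hmemAP mu hmu x⟩ + P ⟨RAP mu x, hmemAP mu hmu x⟩
        = mu • RAP mu x - x :=
      eq_sub_of_add_eq (by rw [add_comm]; exact (sub_eq_iff_eq_add.mp h2).symm)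
    have h3 : lam • RAP mu x - (Agen ⟨RAP mu x, hmemAP mu hmu x⟩ + P ⟨RAP mu x, hmemAP mu hmu x⟩)
        = (lam - mu) • RAP mu x + x := by rw [h4]; module
    simp only [Submodule.coe_mk] at h1
    rw [h3, map_add, (RAP lam).map_smul] at h1
    exact (eq_sub_of_add_eq' h1).symm ▸ rfl
  -- local bound on ‖RAP lam‖ near mu
  have RAP_bd : ∀ (mu : ℂ), 0 < mu.re → ∀ (lam : ℂ), 0 < lam.re →
      ‖lam - mu‖ ≤ 1 / (2 * (‖RAP mu‖ + 1)) → ‖RAP lam‖ ≤ 2 * ‖RAP mu‖ := by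
    intro mu hmu lam hlam hd
    have hr : (0:ℝ) ≤ ‖RAP mu‖ := norm_nonneg _
    have hX : (0:ℝ) ≤ ‖RAP lam‖ := norm_nonneg _
    have ha : (0:ℝ) ≤ ‖lam - mu‖ := norm_nonneg _
    have hb : ‖RAP lam‖ ≤ ‖RAP mu‖ + ‖lam - mu‖ * (‖RAP lam‖ * ‖RAP mu‖) := by
      apply ContinuousLinearMap.opNorm_le_bound _ (by positivity)
      intro x
      rw [res_id lam mu hlam hmu x]
      refine (norm_sub_le _ _).trans ?_
      rw [norm_smul]
      have e1 : ‖RAP mu x‖ ≤ ‖RAP mu‖ * ‖x‖ := (RAP mu).le_opNorm x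
      have e2 : ‖RAP lam (RAP mu x)‖ ≤ ‖RAP lam‖ * (‖RAP mu‖ * ‖x‖) :=
        ((RAP lam).le_opNorm _).trans (by nlinarith [norm_nonneg x])
      nlinarith [norm_nonneg x]
    have key : ‖lam - mu‖ * ‖RAP mu‖ ≤ 1/2 := by
      have h0 : (0:ℝ) < 2 * (‖RAP mu‖ + 1) := by positivity
      rw [le_div_iff₀ h0] at hd
      nlinarith
    nlinarith [mul_le_mul_of_nonneg_right key hX]
  -- pointwise bound on CRes for RAP
  have CRAP_bd : ∀ (lam : ℂ), 0 < lam.re → ∀ u : H,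
      ‖CRes DA C RAP hmemAP lam u‖
        ≤ |c| * ((1 + ‖lam‖) * ‖RAP lam‖ + Mb' + 1) * ‖u‖ := by
    intro lam hlam u
    rw [CRes, dif_pos hlam]
    have h2 : Agen ⟨RAP lam u, hmemAP lam hlam u⟩ + P ⟨RAP lam u, hmemAP lam hlam u⟩
        = lam • RAP lam u - u :=
      eq_sub_of_add_eq (by rw [add_comm]; exact (sub_eq_iff_eq_add.mp (hresAP lam hlam u)).symm)
    have hA : Agen ⟨RAP lam u, hmemAP lam hlam u⟩
        = lam • RAP lam u - P ⟨RAP lam u, hmemAP lam hlam u⟩ - u := by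
      have h2' : Agen ⟨RAP lam u, hmemAP lam hlam u⟩
          = (Agen ⟨RAP lam u, hmemAP lam hlam u⟩ + P ⟨RAP lam u, hmemAP lam hlam u⟩)
            - P ⟨RAP lam u, hmemAP lam hlam u⟩ := by abel
      rw [h2', h2]; abel
    have s1 : ‖RAP lam u‖ ≤ ‖RAP lam‖ * ‖u‖ := (RAP lam).le_opNorm u
    have s2 : ‖P ⟨RAP lam u, hmemAP lam hlam u⟩‖ ≤ Mb' * ‖u‖ := hMb' lam hlam u
    have s3 : ‖Agen ⟨RAP lam u, hmemAP lam hlam u⟩‖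
        ≤ ‖lam‖ * (‖RAP lam‖ * ‖u‖) + Mb' * ‖u‖ + ‖u‖ := by
      rw [hA]
      refine (norm_sub_le _ _).trans ?_
      have h5 := (norm_sub_le (lam • RAP lam u) (P ⟨RAP lam u, hmemAP lam hlam u⟩))
      rw [norm_smul] at h5
      have habs : (0:ℝ) ≤ ‖lam‖ := norm_nonneg _
      nlinarith [norm_nonneg u]
    calc ‖C ⟨RAP lam u, hmemAP lam hlam u⟩‖
        ≤ c * (‖RAP lam u‖ + ‖Agen ⟨RAP lam u, hmemAP lam hlam u⟩‖) := hc _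
      _ ≤ |c| * (‖RAP lam u‖ + ‖Agen ⟨RAP lam u, hmemAP lam hlam u⟩‖) := by
          apply mul_le_mul_of_nonneg_right (le_abs_self c)
          positivity
      _ ≤ |c| * ((1 + ‖lam‖) * ‖RAP lam‖ + Mb' + 1) * ‖u‖ := by
          rw [mul_assoc]
          apply mul_le_mul_of_nonneg_left _ (abs_nonneg c)
          have habs : (0:ℝ) ≤ ‖lam‖ := norm_nonneg _
          nlinarith [norm_nonneg u]
  -- CRes identity for RAP
  have cres_id : ∀ (lam mu : ℂ), 0 < lam.re → 0 < mu.re → ∀ x : H,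
      CRes DA C RAP hmemAP lam x
        = CRes DA C RAP hmemAP mu x - (lam - mu) • CRes DA C RAP hmemAP lam (RAP mu x) := by
    intro lam mu hlam hmu x
    simp only [CRes, dif_pos hlam, dif_pos hmu]
    rw [← LinearMap.map_smul, ← LinearMap.map_sub]
    congr 1
    apply Subtype.ext
    simpa using res_id lam mu hlam hmu x
  have hopen : IsOpen {lam : ℂ | 0 < lam.re} := isOpen_lt continuous_const Complex.continuous_re
  -- continuity of lam ↦ CRes DA C RAP hmemAP lam w at points of the half-plane
  have cres_cont : ∀ (mu : ℂ), 0 < mu.re → ∀ w : H,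
      ContinuousAt (fun lam => CRes DA C RAP hmemAP lam w) mu := by
    intro mu hmu w
    set r := ‖RAP mu‖ with hr
    have hr0 : (0:ℝ) ≤ r := norm_nonneg _
    set δ : ℝ := min 1 (1 / (2 * (r + 1))) with hδdef
    have hδ : 0 < δ := lt_min one_pos (by positivity)
    set K : ℝ := |c| * ((1 + (‖mu‖ + 1)) * (2 * r) + Mb' + 1) * ‖RAP mu w‖ with hK
    have hev : ∀ᶠ lam in 𝓝 mu,
        ‖CRes DA C RAP hmemAP lam w - CRes DA C RAP hmemAP mu w‖
          ≤ K * ‖lam - mu‖ := by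
      filter_upwards [Metric.ball_mem_nhds mu hδ, hopen.mem_nhds hmu] with lam hball hre
      have hre' : 0 < lam.re := hre
      have hd : ‖lam - mu‖ ≤ δ := by
        rw [Metric.mem_ball, Complex.dist_eq] at hball
        exact hball.le
      rw [cres_id lam mu hre' hmu w, sub_sub_cancel_left, norm_neg, norm_smul]
      have hRlam : ‖RAP lam‖ ≤ 2 * r :=
        RAP_bd mu hmu lam hre' (hd.trans (min_le_right _ _))
      have habs : ‖lam‖ ≤ ‖mu‖ + 1 := by
        have h1 : ‖lam‖ - ‖mu‖ ≤ ‖lam - mu‖ := by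
          simpa using norm_sub_norm_le lam mu
        have h2 : ‖lam - mu‖ ≤ 1 := hd.trans (min_le_left _ _)
        linarith
      have hb2 := CRAP_bd lam hre' (RAP mu w)
      have hmono : |c| * ((1 + ‖lam‖) * ‖RAP lam‖ + Mb' + 1) * ‖RAP mu w‖ ≤ K := by
        rw [hK]
        have h3 : (1 + ‖lam‖) * ‖RAP lam‖ ≤ (1 + (‖mu‖ + 1)) * (2 * r) := by
          apply mul_le_mul (by linarith) hRlam (norm_nonneg _) (by positivity)
        apply mul_le_mul_of_nonneg_right _ (norm_nonneg _)
        apply mul_le_mul_of_nonneg_left _ (abs_nonneg c)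
        linarith
      calc ‖lam - mu‖ * ‖CRes DA C RAP hmemAP lam (RAP mu w)‖
          ≤ ‖lam - mu‖ * K :=
            mul_le_mul_of_nonneg_left (hb2.trans hmono) (norm_nonneg _)
        _ = K * ‖lam - mu‖ := mul_comm _ _
    have htend : Tendsto (fun lam => K * ‖lam - mu‖) (𝓝 mu) (𝓝 0) := by
      have h6 : Tendsto (fun lam : ℂ => K * ‖lam - mu‖) (𝓝 mu)
          (𝓝 (K * ‖mu - mu‖)) :=
        ((continuous_norm.comp (continuous_id.sub continuous_const)).tendsto mu).const_mul K
      simpa using h6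
    have h7 := squeeze_zero_norm' hev htend
    exact tendsto_sub_nhds_zero_iff.mp h7
  -- differentiability
  have hdiff : ∀ x : H, DifferentiableOn ℂ (fun lam => CRes DA C RAP hmemAP lam x)
      {lam : ℂ | 0 < lam.re} := by
    intro x mu hmu
    have hmu' : 0 < mu.re := hmu
    have hder : HasDerivAt (fun lam => CRes DA C RAP hmemAP lam x)
        (-(CRes DA C RAP hmemAP mu (RAP mu x))) mu := by
      rw [hasDerivAt_iff_tendsto_slope]
      have hev : ∀ᶠ lam in 𝓝[≠] mu,
          slope (fun lam => CRes DA C RAP hmemAP lam x) mu lam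
            = -(CRes DA C RAP hmemAP lam (RAP mu x)) := by
        filter_upwards [nhdsWithin_le_nhds (hopen.mem_nhds hmu'), self_mem_nhdsWithin]
          with lam hre hne
        have hre' : 0 < lam.re := hre
        have hne' : lam - mu ≠ 0 := sub_ne_zero.mpr hne
        rw [slope_def_module, cres_id lam mu hre' hmu' x, sub_sub_cancel_left, smul_neg,
          smul_smul, inv_mul_cancel₀ hne', one_smul]
      rw [tendsto_congr' hev]
      exact ((cres_cont mu hmu' (RAP mu x)).neg).mono_left nhdsWithin_le_nhds
    exact hder.differentiableAt.differentiableWithinAt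
  obtain ⟨hdiffA, M, hMfin, hMbd⟩ := hH2
  refine ⟨hdiff, (ENNReal.ofReal (1 + Mb')) ^ 2 * M, ?_, ?_⟩
  · exact ENNReal.mul_lt_top (by simp [ENNReal.pow_lt_top, ENNReal.ofReal_lt_top]) hMfin
  · intro a ha
    have hpt : ∀ b : ℝ, hsNormSq e (CRes DA C RAP hmemAP ((a : ℂ) + (b : ℂ) * Complex.I))
        ≤ (ENNReal.ofReal (1 + Mb')) ^ 2
          * hsNormSq e (CRes DA C RA hmemA ((a : ℂ) + (b : ℂ) * Complex.I)) := by
      intro b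
      set lam : ℂ := (a : ℂ) + (b : ℂ) * Complex.I with hlamdef
      have hre : 0 < lam.re := by simp [hlamdef, ha]
      have hTbd : ∀ u : H,
          ‖(C.comp (LinearMap.codRestrict DA (RA lam).toLinearMap (hmemA lam hre))) u‖
          ≤ |c| * ((1 + ‖lam‖) * ‖RA lam‖ + 1) * ‖u‖ := by
        intro u
        have hmemu := hmemA lam hre u
        have hA : Agen ⟨RA lam u, hmemu⟩ = lam • RA lam u - u :=
          eq_sub_of_add_eq (by rw [add_comm]; exact (sub_eq_iff_eq_add.mp (hresA lam hre u)).symm)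
        have s1 : ‖RA lam u‖ ≤ ‖RA lam‖ * ‖u‖ := (RA lam).le_opNorm u
        have s3 : ‖Agen ⟨RA lam u, hmemu⟩‖ ≤ ‖lam‖ * (‖RA lam‖ * ‖u‖) + ‖u‖ := by
          rw [hA]
          refine (norm_sub_le _ _).trans ?_
          rw [norm_smul]
          have habs : (0:ℝ) ≤ ‖lam‖ := norm_nonneg _
          nlinarith [norm_nonneg u]
        calc ‖(C.comp (LinearMap.codRestrict DA (RA lam).toLinearMap (hmemA lam hre))) u‖
            = ‖C ⟨RA lam u, hmemu⟩‖ := rfl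
          _ ≤ c * (‖RA lam u‖ + ‖Agen ⟨RA lam u, hmemu⟩‖) := hc _
          _ ≤ |c| * (‖RA lam u‖ + ‖Agen ⟨RA lam u, hmemu⟩‖) := by
              apply mul_le_mul_of_nonneg_right (le_abs_self c)
              positivity
          _ ≤ |c| * ((1 + ‖lam‖) * ‖RA lam‖ + 1) * ‖u‖ := by
              rw [mul_assoc]
              apply mul_le_mul_of_nonneg_left _ (abs_nonneg c)
              have habs : (0:ℝ) ≤ ‖lam‖ := norm_nonneg _
              nlinarith [norm_nonneg u]
      set Tlam : H →L[ℂ] Y := LinearMap.mkContinuous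
        (C.comp (LinearMap.codRestrict DA (RA lam).toLinearMap (hmemA lam hre)))
        (|c| * ((1 + ‖lam‖) * ‖RA lam‖ + 1)) hTbd with hTlamdef
      set Blam : H →L[ℂ] H := 1 + LinearMap.mkContinuous
        (P.comp (LinearMap.codRestrict DA (RAP lam).toLinearMap (hmemAP lam hre)))
        Mb' (fun u => hMb' lam hre u) with hBlamdef
      have hTeq : ∀ u : H, Tlam u = CRes DA C RA hmemA lam u := by
        intro u
        rw [CRes, dif_pos hre]
        rfl
      have hBnorm : (‖Blam‖₊ : ℝ≥0∞) ≤ ENNReal.ofReal (1 + Mb') := by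
        rw [← enorm_eq_nnnorm, ← ofReal_norm]
        apply ENNReal.ofReal_le_ofReal
        apply ContinuousLinearMap.opNorm_le_bound _ (by positivity)
        intro u
        have hBu' : Blam u = u + P ⟨RAP lam u, hmemAP lam hre u⟩ := rfl
        have h8 : ‖Blam u‖ ≤ ‖u‖ + Mb' * ‖u‖ := by
          rw [hBu']
          exact (norm_add_le _ _).trans (by have h9 := hMb' lam hre u; linarith)
        linarith [h8]
      have hkey : ∀ u : H, CRes DA C RAP hmemAP lam u = Tlam (Blam u) := by
        intro u
        have hmemu := hmemAP lam hre u
        have h2 : Agen ⟨RAP lam u, hmemu⟩ + P ⟨RAP lam u, hmemu⟩ = lam • RAP lam u - u :=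
          eq_sub_of_add_eq (by rw [add_comm]; exact (sub_eq_iff_eq_add.mp (hresAP lam hre u)).symm)
        have harg : u + P ⟨RAP lam u, hmemu⟩ = lam • RAP lam u - Agen ⟨RAP lam u, hmemu⟩ := by
          have h2' : Agen ⟨RAP lam u, hmemu⟩
              = (Agen ⟨RAP lam u, hmemu⟩ + P ⟨RAP lam u, hmemu⟩) - P ⟨RAP lam u, hmemu⟩ := by
            abel
          rw [h2', h2]; abel
        have h3 := hresA2 lam hre ⟨RAP lam u, hmemu⟩
        simp only [Submodule.coe_mk] at h3
        have hBu : Blam u = u + P ⟨RAP lam u, hmemu⟩ := by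
          rw [hBlamdef]
          rfl
        have hRAeq : RA lam (Blam u) = RAP lam u := by
          rw [hBu, harg, h3]
        rw [CRes, dif_pos hre]
        have h11 : Tlam (Blam u) = C ⟨RA lam (Blam u), hmemA lam hre (Blam u)⟩ := rfl
        rw [h11]
        congr 1
        exact Subtype.ext hRAeq.symm
      calc hsNormSq e (CRes DA C RAP hmemAP lam)
          = ∑' k, (‖Tlam (Blam (e k))‖₊ : ℝ≥0∞) ^ 2 := by
            rw [hsNormSq]
            congr 1; funext k; rw [hkey]
        _ ≤ (‖Blam‖₊ : ℝ≥0∞) ^ 2 * ∑' k, (‖Tlam (e k)‖₊ : ℝ≥0∞) ^ 2 := hs_comp_le' e Tlam Blam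
        _ ≤ (ENNReal.ofReal (1 + Mb')) ^ 2 * hsNormSq e (CRes DA C RA hmemA lam) := by
            rw [hsNormSq]
            apply mul_le_mul'
            · exact pow_le_pow_left' hBnorm 2
            · apply le_of_eq
              congr 1; funext k; rw [hTeq]
    calc (∫⁻ b : ℝ, hsNormSq e (CRes DA C RAP hmemAP ((a : ℂ) + (b : ℂ) * Complex.I)))
        ≤ ∫⁻ b : ℝ, (ENNReal.ofReal (1 + Mb')) ^ 2
            * hsNormSq e (CRes DA C RA hmemA ((a : ℂ) + (b : ℂ) * Complex.I)) :=
          lintegral_mono hpt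
      _ = (ENNReal.ofReal (1 + Mb')) ^ 2
            * ∫⁻ b : ℝ, hsNormSq e (CRes DA C RA hmemA ((a : ℂ) + (b : ℂ) * Complex.I)) :=
          lintegral_const_mul' _ _ (ENNReal.pow_ne_top ENNReal.ofReal_ne_top)
      _ ≤ (ENNReal.ofReal (1 + Mb')) ^ 2 * M :=
          mul_le_mul_right (hMbd a ha) _
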